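/- Let k be a field and A = k⟨a,b⟩/(a², b², (ab)^m − (ba)^m, (ab)^m a, (ba)^m b) with m ≥ 1. Then the Jacobson radical J of A satisfies J^{2m+1} = 0 and J^{2m} ≠ 0; in particular A is a local algebra with residue field k. -/

import Mathlib

open FreeAlgebra

/-- Relations of the torus-loop algebra `k⟨a,b⟩/(a², b², (ab)^m − (ba)^m, (ab)^m a, (ba)^m b)`,
where `a = ι k 0` and `b = ι k 1`. -/
inductive TorusRel (k : Type*) [Field k] (m : ℕ) :
    FreeAlgebra k (Fin 2) → FreeAlgebra k (Fin 2) → Prop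
  | asq : TorusRel k m (ι k 0 * ι k 0) 0
  | bsq : TorusRel k m (ι k 1 * ι k 1) 0
  | comm : TorusRel k m ((ι k 0 * ι k 1) ^ m) ((ι k 1 * ι k 0) ^ m)
  | soca : TorusRel k m ((ι k 0 * ι k 1) ^ m * ι k 0) 0
  | socb : TorusRel k m ((ι k 1 * ι k 0) ^ m * ι k 1) 0



namespace TorusAux

abbrev TIdx (m : ℕ) := (Fin 2 × Fin (2*m)) ⊕ Bool

/-- partial left-multiplication by generator `c` on the basis -/
def fgen (m : ℕ) (c : Fin 2) : TIdx m → Option (TIdx m)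
  | Sum.inr false => if h : 0 < 2*m then some (Sum.inl (c, ⟨0, h⟩)) else none
  | Sum.inr true => none
  | Sum.inl (s, j) =>
    if s = c then none
    else if h : (j:ℕ) + 2 < 2*m then some (Sum.inl (c, ⟨(j:ℕ)+1, by omega⟩))
    else if (j:ℕ) + 2 = 2*m then some (Sum.inr true) else none

variable (k : Type*) [Field k]

noncomputable def Fop {m : ℕ} (f : TIdx m → Option (TIdx m)) :
    Module.End k (TIdx m →₀ k) :=
  Finsupp.lsum k fun i => (f i).elim 0 Finsupp.lsingle

variable {k}

lemma Fop_single {m : ℕ} (f : TIdx m → Option (TIdx m)) (i : TIdx m) (c : k) :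
    Fop k f (Finsupp.single i c) = (f i).elim 0 (fun j => Finsupp.single j c) := by
  rw [Fop, Finsupp.lsum_single]
  cases f i <;> simp

lemma Fop_mul {m : ℕ} (f g : TIdx m → Option (TIdx m)) :
    Fop k f * Fop k g = Fop k (fun i => (g i).bind f) := by
  apply Finsupp.lhom_ext
  intro i c
  rw [Module.End.mul_apply, Fop_single, Fop_single]
  cases g i with
  | none => simp
  | some j => simpa using Fop_single f j c

lemma Fop_none {m : ℕ} : Fop k (fun _ : TIdx m => none) = 0 := by
  apply Finsupp.lhom_ext
  intro i c
  simp [Fop_single]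

/-- iterated bind -/
def bpow {m : ℕ} (f : TIdx m → Option (TIdx m)) : ℕ → TIdx m → Option (TIdx m)
  | 0 => some
  | n+1 => fun i => (f i).bind (bpow f n)

lemma Fop_some {m : ℕ} : Fop k (some : TIdx m → Option (TIdx m)) = 1 := by
  apply Finsupp.lhom_ext
  intro i c
  simp [Fop_single]

lemma Fop_pow {m : ℕ} (f : TIdx m → Option (TIdx m)) (n : ℕ) :
    (Fop k f) ^ n = Fop k (bpow f n) := by
  induction n with
  | zero => simpa [bpow] using (Fop_some (k := k) (m := m)).symm
  | succ n ih => rw [pow_succ, ih, Fop_mul]; rfl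

end TorusAux

namespace TorusAux

def mstep (m : ℕ) (c c' : Fin 2) : TIdx m → Option (TIdx m) :=
  fun x => (fgen m c' x).bind (fgen m c)

def Zmap (m : ℕ) : TIdx m → Option (TIdx m) :=
  fun x => if x = Sum.inr false then some (Sum.inr true) else none

variable {m : ℕ} {c c' : Fin 2}

lemma fgen_self (j : Fin (2*m)) : fgen m c (Sum.inl (c, j)) = none := by
  simp [fgen]

lemma fgen_z : fgen m c (Sum.inr true) = none := rfl

lemma asq_aux (x : TIdx m) : (fgen m c x).bind (fgen m c) = none := by
  rcases x with ⟨s, j⟩ | b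
  · by_cases h : s = c
    · subst h; simp [fgen_self]
    · simp only [fgen, if_neg h]
      split_ifs <;> simp [fgen_self, fgen_z]
  · cases b
    · simp only [fgen]
      split_ifs <;> simp [fgen_self]
    · simp [fgen_z]

lemma soc_aux (x : TIdx m) : (fgen m c x).bind (Zmap m) = none := by
  rcases x with ⟨s, j⟩ | b
  · by_cases h : s = c
    · subst h; simp [fgen_self]
    · simp only [fgen, if_neg h]
      split_ifs <;> simp [Zmap]
  · cases b
    · simp only [fgen]
      split_ifs <;> simp [Zmap]
    · simp [fgen_z]

lemma fgen_unit' (h : 0 < 2*m) :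
    fgen m c (Sum.inr false) = some (Sum.inl (c, ⟨0, h⟩)) := by
  simp only [fgen]; rw [dif_pos h]

lemma fgen_ext {s : Fin 2} {j : Fin (2*m)} (h : s ≠ c) (h2 : (j:ℕ)+2 < 2*m) :
    fgen m c (Sum.inl (s,j)) = some (Sum.inl (c, ⟨(j:ℕ)+1, by omega⟩)) := by
  simp only [fgen]; rw [if_neg h, dif_pos h2]

lemma fgen_hit {s : Fin 2} {j : Fin (2*m)} (h : s ≠ c) (h2 : (j:ℕ)+2 = 2*m) :
    fgen m c (Sum.inl (s,j)) = some (Sum.inr true) := by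
  simp only [fgen]; rw [if_neg h, dif_neg (by omega), if_pos h2]

lemma fgen_dead {s : Fin 2} {j : Fin (2*m)} (h : s ≠ c) (h2 : 2*m < (j:ℕ)+2) :
    fgen m c (Sum.inl (s,j)) = none := by
  simp only [fgen]; rw [if_neg h, dif_neg (by omega), if_neg (by omega)]

lemma bpow_succ (f : TIdx m → Option (TIdx m)) (n : ℕ) (x : TIdx m) :
    bpow f (n+1) x = (f x).bind (bpow f n) := rfl

lemma bpow_z (hcc : c ≠ c') (kk : ℕ) (hk : 1 ≤ kk) :
    bpow (mstep m c c') kk (Sum.inr true) = none := by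
  obtain ⟨n, rfl⟩ : ∃ n, kk = n + 1 := ⟨kk - 1, by omega⟩
  rw [bpow_succ, mstep, fgen_z, Option.bind_none, Option.bind_none]

lemma bpow_wc' (hcc : c ≠ c') (kk : ℕ) (hk : 1 ≤ kk) (j : Fin (2*m)) :
    bpow (mstep m c c') kk (Sum.inl (c', j)) = none := by
  obtain ⟨n, rfl⟩ : ∃ n, kk = n + 1 := ⟨kk - 1, by omega⟩
  rw [bpow_succ, mstep, fgen_self, Option.bind_none, Option.bind_none]

lemma bpow_wc (hcc : c ≠ c') (kk : ℕ) : ∀ (j : Fin (2*m)),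
    2*m + 1 ≤ (j:ℕ) + 1 + 2*kk → bpow (mstep m c c') kk (Sum.inl (c, j)) = none := by
  induction kk with
  | zero => intro j hj; exact absurd j.isLt (by omega)
  | succ n ih =>
    intro j hj
    rw [bpow_succ, mstep]
    rcases Nat.lt_or_ge ((j:ℕ)+2) (2*m) with h1 | h1
    · rw [fgen_ext hcc h1, Option.bind_some]
      rcases Nat.lt_or_ge ((j:ℕ)+3) (2*m) with h2 | h2
      · rw [fgen_ext (Ne.symm hcc) (by simp only [Fin.val_mk]; omega : ((⟨(j:ℕ)+1, by omega⟩ : Fin (2*m)):ℕ)+2 < 2*m),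
          Option.bind_some]
        exact ih ⟨(j:ℕ)+2, by omega⟩ (by simp only [Fin.val_mk]; omega)
      · have h3 : ((⟨(j:ℕ)+1, by omega⟩ : Fin (2*m)):ℕ)+2 = 2*m := by
          simp only [Fin.val_mk]; omega
        rw [fgen_hit (Ne.symm hcc) h3, Option.bind_some]
        refine bpow_z hcc n ?_
        have h3' : (j:ℕ)+1+2 = 2*m := h3
        omega
    · rcases Nat.lt_or_ge (2*m) ((j:ℕ)+2) with h3 | h3
      · rw [fgen_dead hcc h3, Option.bind_none, Option.bind_none]
      · rw [fgen_hit hcc (by omega), Option.bind_some, fgen_z, Option.bind_none]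

lemma bpow_exact (hcc : c ≠ c') (kk : ℕ) : ∀ (j : Fin (2*m)), 1 ≤ kk →
    (j:ℕ) + 1 + 2*kk = 2*m →
    bpow (mstep m c c') kk (Sum.inl (c, j)) = some (Sum.inr true) := by
  induction kk with
  | zero => omega
  | succ n ih =>
    intro j _ hj
    rw [bpow_succ, mstep, fgen_ext hcc (by omega), Option.bind_some]
    rcases Nat.lt_or_ge n 1 with hn | hn
    · have hn0 : n = 0 := by omega
      subst hn0
      rw [fgen_hit (Ne.symm hcc) (show ((⟨(j:ℕ)+1, by omega⟩ : Fin (2*m)):ℕ)+2 = 2*m by simp only [Fin.val_mk]; omega), Option.bind_some]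
      rfl
    · rw [fgen_ext (Ne.symm hcc) (show ((⟨(j:ℕ)+1, by omega⟩ : Fin (2*m)):ℕ)+2 < 2*m by simp only [Fin.val_mk]; omega), Option.bind_some]
      exact ih ⟨(j:ℕ)+2, by omega⟩ hn (by simp only [Fin.val_mk]; omega)

lemma bpow_unit (hm : 1 ≤ m) (hcc : c ≠ c') :
    bpow (mstep m c c') m (Sum.inr false) = some (Sum.inr true) := by
  obtain ⟨n, hn⟩ : ∃ n, m = n + 1 := ⟨m - 1, by omega⟩
  rw [hn, bpow_succ, mstep, fgen_unit' (by omega), Option.bind_some]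
  rcases Nat.lt_or_ge n 1 with h | h
  · have : n = 0 := by omega
    subst this
    rw [fgen_hit (Ne.symm hcc) (show ((⟨0, by omega⟩ : Fin (2*1)):ℕ)+2 = 2*1 by rfl), Option.bind_some]
    rfl
  · rw [fgen_ext (Ne.symm hcc) (show ((⟨0, by omega⟩ : Fin (2*(n+1))):ℕ)+2 < 2*(n+1) by simp only [Fin.val_mk]; omega), Option.bind_some]
    exact bpow_exact hcc n ⟨1, by omega⟩ h (by simp only [Fin.val_mk]; omega)

lemma fin2_cases {s : Fin 2} (hcc : c ≠ c') : s = c ∨ s = c' := by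
  have h1 : (s:ℕ) < 2 := s.isLt
  have h2 : (c:ℕ) < 2 := c.isLt
  have h3 : (c':ℕ) < 2 := c'.isLt
  have h4 : (c:ℕ) ≠ (c':ℕ) := fun h => hcc (Fin.ext h)
  rcases Nat.lt_or_ge (s:ℕ) 1 with h | h <;> rcases Nat.lt_or_ge (c:ℕ) 1 with h' | h'
  · left; exact Fin.ext (by omega)
  · right; exact Fin.ext (by omega)
  · right; exact Fin.ext (by omega)
  · left; exact Fin.ext (by omega)

lemma bpow_m (hm : 1 ≤ m) (hcc : c ≠ c') :
    bpow (mstep m c c') m = Zmap m := by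
  funext x
  rcases x with ⟨s, j⟩ | b
  · rcases fin2_cases (s := s) hcc with rfl | rfl
    · rw [bpow_wc hcc m j (by have := j.isLt; omega)]; simp [Zmap]
    · rw [bpow_wc' hcc m hm j]; simp [Zmap]
  · cases b
    · rw [bpow_unit hm hcc]; simp [Zmap]
    · rw [bpow_z hcc m hm]; simp [Zmap]

end TorusAux

section Quot
open TorusAux

variable {k : Type*} [Field k] {m : ℕ}

/-- the generators in the quotient algebra -/
noncomputable def tgen (k : Type*) [Field k] (m : ℕ) (s : Fin 2) : RingQuot (TorusRel k m) :=
  RingQuot.mkAlgHom k (TorusRel k m) (FreeAlgebra.ι k s)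

lemma h_a2 : tgen k m 0 * tgen k m 0 = 0 := by
  simp only [tgen]; rw [← map_mul, RingQuot.mkAlgHom_rel k TorusRel.asq, map_zero]

lemma h_b2 : tgen k m 1 * tgen k m 1 = 0 := by
  simp only [tgen]; rw [← map_mul, RingQuot.mkAlgHom_rel k TorusRel.bsq, map_zero]

lemma h_comm : (tgen k m 0 * tgen k m 1)^m = (tgen k m 1 * tgen k m 0)^m := by
  simp only [tgen]; rw [← map_mul, ← map_pow, RingQuot.mkAlgHom_rel k TorusRel.comm, map_pow, map_mul]

lemma h_soca : (tgen k m 0 * tgen k m 1)^m * tgen k m 0 = 0 := by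
  simp only [tgen]; rw [← map_mul, ← map_pow, ← map_mul, RingQuot.mkAlgHom_rel k TorusRel.soca, map_zero]

lemma h_socb : (tgen k m 1 * tgen k m 0)^m * tgen k m 1 = 0 := by
  simp only [tgen]; rw [← map_mul, ← map_pow, ← map_mul, RingQuot.mkAlgHom_rel k TorusRel.socb, map_zero]

def oth : Fin 2 → Fin 2 := fun s => if s = 0 then 1 else 0

lemma oth_oth (s : Fin 2) : oth (oth s) = s := by
  rcases fin2_cases (c := (0 : Fin 2)) (c' := 1) (by decide) (s := s) with rfl | rfl <;> rfl

lemma oth_of_ne {s c : Fin 2} (h : c ≠ s) : oth c = s := by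
  rcases fin2_cases (c := (0 : Fin 2)) (c' := 1) (by decide) (s := s) with rfl | rfl <;>
    rcases fin2_cases (c := (0 : Fin 2)) (c' := 1) (by decide) (s := c) with rfl | rfl <;>
      first | rfl | exact absurd rfl h

lemma tgen_sq (s : Fin 2) : tgen k m s * tgen k m s = 0 := by
  rcases fin2_cases (c := (0 : Fin 2)) (c' := 1) (by decide) (s := s) with rfl | rfl
  · exact h_a2
  · exact h_b2

/-- alternating word of given length and starting letter -/
noncomputable def alt (k : Type*) [Field k] (m : ℕ) : ℕ → Fin 2 → RingQuot (TorusRel k m)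
  | 0, _ => 1
  | n+1, s => tgen k m s * alt k m n (oth s)

lemma alt_odd : ∀ (n : ℕ) (s : Fin 2),
    alt k m (2*n+1) s = (tgen k m s * tgen k m (oth s))^n * tgen k m s := by
  intro n
  induction n with
  | zero => intro s; show tgen k m s * alt k m 0 (oth s) = _; simp [alt]
  | succ n ih =>
    intro s
    have e : 2*(n+1)+1 = (2*n+1)+1+1 := by ring
    rw [e]
    show tgen k m s * (tgen k m (oth s) * alt k m (2*n+1) (oth (oth s))) = _
    rw [oth_oth, ih s, pow_succ']
    noncomm_ring

lemma alt_top_zero (s : Fin 2) : alt k m (2*m+1) s = 0 := by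
  rw [alt_odd]
  rcases fin2_cases (c := (0 : Fin 2)) (c' := 1) (by decide) (s := s) with rfl | rfl
  · exact h_soca
  · exact h_socb

lemma alt_zero {n : ℕ} (hn : 2*m+1 ≤ n) (s : Fin 2) : alt k m n s = 0 := by
  obtain ⟨j, rfl⟩ : ∃ j, n = 2*m+1+j := ⟨n - (2*m+1), by omega⟩
  clear hn
  induction j generalizing s with
  | zero => exact alt_top_zero s
  | succ j ih =>
    have e : 2*m+1+(j+1) = (2*m+1+j)+1 := by ring
    rw [e]
    show tgen k m s * alt k m (2*m+1+j) (oth s) = 0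
    rw [ih, mul_zero]

lemma prod_cases : ∀ l : List (Fin 2),
    ((l.map (tgen k m)).prod = 0) ∨ ∃ s, (l.map (tgen k m)).prod = alt k m l.length s := by
  intro l
  induction l with
  | nil => exact Or.inr ⟨0, by simp [alt]⟩
  | cons c l ih =>
    rw [List.map_cons, List.prod_cons]
    rcases ih with h | ⟨s, hs⟩
    · left; rw [h, mul_zero]
    · cases l with
      | nil =>
        right; refine ⟨c, ?_⟩
        simp only [List.length_nil] at hs
        rw [hs]
        show _ = tgen k m c * alt k m 0 (oth c)
        rfl
      | cons x xs =>
        rw [hs]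
        by_cases hcs : c = s
        · left
          subst hcs
          show tgen k m c * alt k m (xs.length+1) c = 0
          show tgen k m c * (tgen k m c * alt k m xs.length (oth c)) = 0
          rw [← mul_assoc, tgen_sq, zero_mul]
        · right
          refine ⟨c, ?_⟩
          show _ = tgen k m c * alt k m ((x::xs).length) (oth c)
          rw [oth_of_ne hcs]
lemma word_zero {l : List (Fin 2)} (hl : 2*m+1 ≤ l.length) :
    (l.map (tgen k m)).prod = 0 := by
  rcases prod_cases (k := k) (m := m) l with h | ⟨s, hs⟩
  · exact h
  · rw [hs]; exact alt_zero hl s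

end Quot

section Main
open TorusAux

variable {k : Type*} [Field k] {m : ℕ}

noncomputable def rep (k : Type*) [Field k] (m : ℕ) :
    FreeAlgebra k (Fin 2) →ₐ[k] Module.End k (TIdx m →₀ k) :=
  FreeAlgebra.lift k (fun s => Fop k (fgen m s))

lemma rep_ι (s : Fin 2) : rep k m (FreeAlgebra.ι k s) = Fop k (fgen m s) :=
  FreeAlgebra.lift_ι_apply _ _

lemma Fop_fgen_sq (c : Fin 2) : Fop k (fgen m c) * Fop k (fgen m c) = 0 := by
  rw [Fop_mul]
  have h : (fun i => (fgen m c i).bind (fgen m c)) = (fun _ : TIdx m => (none : Option (TIdx m))) :=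
    funext fun i => asq_aux i
  rw [h, Fop_none]

lemma Fop_pair (c c' : Fin 2) :
    Fop k (fgen m c) * Fop k (fgen m c') = Fop k (mstep m c c') := by
  rw [Fop_mul]; rfl

lemma Fop_Z {c c' : Fin 2} (hm : 1 ≤ m) (hcc : c ≠ c') :
    (Fop k (fgen m c) * Fop k (fgen m c'))^m = Fop k (Zmap m) := by
  rw [Fop_pair, Fop_pow, bpow_m hm hcc]

lemma Fop_Z_soc (c : Fin 2) : Fop k (Zmap m) * Fop k (fgen m c) = 0 := by
  rw [Fop_mul]
  have h : (fun i => (fgen m c i).bind (Zmap m)) = (fun _ : TIdx m => (none : Option (TIdx m))) :=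
    funext fun i => soc_aux i
  rw [h, Fop_none]

lemma rep_rel (hm : 1 ≤ m) : ∀ ⦃x y⦄, TorusRel k m x y → rep k m x = rep k m y := by
  intro x y h
  cases h with
  | asq => simp only [map_mul, map_zero, rep_ι]; exact Fop_fgen_sq 0
  | bsq => simp only [map_mul, map_zero, rep_ι]; exact Fop_fgen_sq 1
  | comm =>
      simp only [map_pow, map_mul, rep_ι]
      rw [Fop_Z hm (by decide : (0 : Fin 2) ≠ 1), Fop_Z hm (by decide : (1 : Fin 2) ≠ 0)]
  | soca =>
      simp only [map_pow, map_mul, map_zero, rep_ι]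
      rw [Fop_Z hm (by decide : (0 : Fin 2) ≠ 1), Fop_Z_soc]
  | socb =>
      simp only [map_pow, map_mul, map_zero, rep_ι]
      rw [Fop_Z hm (by decide : (1 : Fin 2) ≠ 0), Fop_Z_soc]

noncomputable def rhom (k : Type*) [Field k] (m : ℕ) (hm : 1 ≤ m) :
    RingQuot (TorusRel k m) →ₐ[k] Module.End k (TIdx m →₀ k) :=
  RingQuot.liftAlgHom k ⟨rep k m, rep_rel hm⟩

lemma rhom_gen (hm : 1 ≤ m) (s : Fin 2) : rhom k m hm (tgen k m s) = Fop k (fgen m s) := by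
  rw [rhom, tgen, RingQuot.liftAlgHom_mkAlgHom_apply, rep_ι]

lemma z_ne (hm : 1 ≤ m) : (tgen k m 0 * tgen k m 1)^m ≠ 0 := by
  intro h
  have h2 := congrArg (rhom k m hm) h
  rw [map_zero, map_pow, map_mul, rhom_gen, rhom_gen,
    Fop_Z hm (by decide : (0 : Fin 2) ≠ 1)] at h2
  have h3 := congrArg
    (fun T : Module.End k (TIdx m →₀ k) =>
      T (Finsupp.single (Sum.inr false : TIdx m) (1:k)) (Sum.inr true : TIdx m)) h2
  simp [Fop_single, Zmap] at h3

noncomputable def Wd (k : Type*) [Field k] (m : ℕ) (n : ℕ) :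
    Submodule k (RingQuot (TorusRel k m)) :=
  Submodule.span k {x | ∃ l : List (Fin 2), n ≤ l.length ∧ (l.map (tgen k m)).prod = x}

noncomputable def Idl (k : Type*) [Field k] (m : ℕ) : Ideal (RingQuot (TorusRel k m)) :=
  Ideal.span (Set.range (tgen k m))

lemma adjoin_top : Algebra.adjoin k (Set.range (tgen k m)) = ⊤ := by
  have h1 : Algebra.adjoin k (Set.range (FreeAlgebra.ι k : Fin 2 → _)) = ⊤ :=
    FreeAlgebra.adjoin_range_ι k (Fin 2)
  have h2 := congrArg (Subalgebra.map (RingQuot.mkAlgHom k (TorusRel k m))) h1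
  rw [AlgHom.map_adjoin, Algebra.map_top,
    (AlgHom.range_eq_top _).mpr (RingQuot.mkAlgHom_surjective k _), ← Set.range_comp] at h2
  have h3 : (⇑(RingQuot.mkAlgHom k (TorusRel k m)) ∘ FreeAlgebra.ι k) = tgen k m := rfl
  rw [h3] at h2
  exact h2

lemma list_lift : ∀ (l : List (RingQuot (TorusRel k m))),
    (∀ y ∈ l, y ∈ Set.range (tgen k m)) → ∃ l' : List (Fin 2), l'.map (tgen k m) = l := by
  intro l
  induction l with
  | nil => exact fun _ => ⟨[], rfl⟩
  | cons y l ih =>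
    intro h
    obtain ⟨s, rfl⟩ := h y (List.mem_cons_self)
    obtain ⟨l', hl'⟩ := ih (fun z hz => h z (List.mem_cons_of_mem _ hz))
    exact ⟨s :: l', by rw [List.map_cons, hl']⟩

lemma Wd_top : Wd k m 0 = ⊤ := by
  have h3 := Algebra.adjoin_eq_span (R := k) (s := Set.range (tgen k m))
  rw [adjoin_top, Algebra.top_toSubmodule] at h3
  rw [eq_top_iff, h3]
  refine Submodule.span_le.mpr ?_
  intro x hx
  obtain ⟨l, hl, rfl⟩ := Submonoid.exists_list_of_mem_closure hx
  obtain ⟨l', rfl⟩ := list_lift l hl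
  exact Submodule.subset_span ⟨l', by omega, rfl⟩

lemma Wd_mul (i j : ℕ) : Wd k m i * Wd k m j ≤ Wd k m (i+j) := by
  rw [Wd, Wd, Submodule.span_mul_span]
  refine Submodule.span_le.mpr ?_
  intro x hx
  rcases Set.mem_mul.mp hx with ⟨p, ⟨l1, hl1, rfl⟩, q, ⟨l2, hl2, rfl⟩, rfl⟩
  exact Submodule.subset_span
    ⟨l1 ++ l2, by rw [List.length_append]; omega, by rw [List.map_append, List.prod_append]⟩

lemma Idl_le_W1 : (Idl k m).restrictScalars k ≤ Wd k m 1 := by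
  intro x hx
  rw [Submodule.restrictScalars_mem] at hx
  refine Submodule.span_induction ?_ ?_ ?_ ?_ hx
  · rintro x ⟨s, rfl⟩
    exact Submodule.subset_span ⟨[s], by simp, by simp⟩
  · exact zero_mem _
  · exact fun x y _ _ hx hy => add_mem hx hy
  · intro r x _ hx
    rw [smul_eq_mul]
    have hr : r ∈ Wd k m 0 := by rw [Wd_top]; trivial
    exact Wd_mul 0 1 (Submodule.mul_mem_mul hr hx)

lemma Wd_bot : Wd k m (2*m+1) = ⊥ := by
  refine Submodule.span_eq_bot.mpr ?_
  rintro x ⟨l, hl, rfl⟩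
  exact word_zero hl

lemma Idl_pow_le : ∀ n : ℕ, 1 ≤ n → ((Idl k m).restrictScalars k)^n ≤ Wd k m n := by
  intro n
  induction n with
  | zero => omega
  | succ n ih =>
    intro _
    rcases Nat.lt_or_ge n 1 with h | h
    · have : n = 0 := by omega
      subst this
      rw [pow_one]
      exact Idl_le_W1
    · rw [pow_succ]
      exact le_trans (mul_le_mul' (ih h) Idl_le_W1) (Wd_mul n 1)

lemma key1 : ((Idl k m).restrictScalars k)^(2*m+1) = ⊥ :=
  le_bot_iff.mp (Wd_bot (k := k) (m := m) ▸ Idl_pow_le (2*m+1) (by omega))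

noncomputable def eps (k : Type*) [Field k] (m : ℕ) : RingQuot (TorusRel k m) →ₐ[k] k :=
  RingQuot.liftAlgHom k ⟨FreeAlgebra.lift k (fun _ => (0:k)), by
    intro x y h
    cases h <;> simp⟩

lemma eps_gen (s : Fin 2) : eps k m (tgen k m s) = 0 := by
  rw [eps, tgen, RingQuot.liftAlgHom_mkAlgHom_apply, FreeAlgebra.lift_ι_apply]

lemma Idl_le_ker : Idl k m ≤ RingHom.ker (eps k m) := by
  refine Ideal.span_le.mpr ?_
  rintro y ⟨s, rfl⟩
  exact RingHom.mem_ker.mpr (eps_gen s)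

lemma one_notin_Idl : (1 : RingQuot (TorusRel k m)) ∉ Idl k m := by
  intro h
  have h1 : eps k m 1 = 0 := RingHom.mem_ker.mp (Idl_le_ker h)
  rw [map_one] at h1
  exact one_ne_zero h1

lemma decomp (x : RingQuot (TorusRel k m)) :
    ∃ c : k, x - algebraMap k _ c ∈ Idl k m := by
  have hx : x ∈ Algebra.adjoin k (Set.range (tgen k m)) := by rw [adjoin_top]; trivial
  refine Algebra.adjoin_induction ?_ ?_ ?_ ?_ hx
  · rintro x ⟨s, rfl⟩
    refine ⟨0, ?_⟩
    rw [map_zero, sub_zero]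
    exact Ideal.subset_span ⟨s, rfl⟩
  · exact fun r => ⟨r, by simp⟩
  · rintro x y _ _ ⟨c1, h1⟩ ⟨c2, h2⟩
    refine ⟨c1 + c2, ?_⟩
    rw [map_add, ← sub_add_sub_comm]
    exact add_mem h1 h2
  · rintro x y _ _ ⟨c1, h1⟩ ⟨c2, h2⟩
    refine ⟨c1 * c2, ?_⟩
    have e : x*y - algebraMap k _ (c1*c2) =
        x*(y - algebraMap k _ c2) + (x - algebraMap k _ c1)*(algebraMap k _ c2) := by
      rw [map_mul, mul_sub, sub_mul, sub_add_sub_cancel]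
    rw [e]
    refine add_mem (Ideal.mul_mem_left _ _ h2) ?_
    rw [← Algebra.commutes]
    exact Ideal.mul_mem_left _ _ h1

lemma Idl_max : (Idl k m).IsMaximal := by
  refine Ideal.isMaximal_iff.mpr ⟨one_notin_Idl, ?_⟩
  intro J x hIJ hxI hxJ
  obtain ⟨c, hc⟩ := decomp x
  have hc0 : c ≠ 0 := by
    rintro rfl
    rw [map_zero, sub_zero] at hc
    exact hxI hc
  have hac : algebraMap k _ c ∈ J := by
    have := J.sub_mem hxJ (hIJ hc)
    rwa [sub_sub_cancel] at this
  have h1 : (1 : RingQuot (TorusRel k m)) = algebraMap k _ c⁻¹ * algebraMap k _ c := by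
    rw [← map_mul, inv_mul_cancel₀ hc0, map_one]
  rw [h1]
  exact Ideal.mul_mem_left _ _ hac

lemma Idl_nil {x : RingQuot (TorusRel k m)} (hx : x ∈ Idl k m) : x^(2*m+1) = 0 := by
  have h1 : x ∈ (Idl k m).restrictScalars k := hx
  have h2 := Submodule.pow_mem_pow _ h1 (2*m+1)
  rw [key1] at h2
  exact Submodule.mem_bot k |>.mp h2

lemma Idl_le_jac : Idl k m ≤ (⊥ : Ideal (RingQuot (TorusRel k m))).jacobson := by
  intro x hx
  rw [Ideal.jacobson, Submodule.mem_sInf]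
  intro M hM
  by_contra hxM
  have hlt : M < M ⊔ Ideal.span {x} := by
    refine lt_of_le_of_ne le_sup_left ?_
    intro he
    have hx2 : x ∈ M ⊔ Ideal.span {x} :=
      Submodule.mem_sup_right (Ideal.subset_span (Set.mem_singleton x))
    rw [← he] at hx2
    exact hxM hx2
  have htop : M ⊔ Ideal.span {x} = ⊤ := hM.2.1.2 _ hlt
  have h1 : (1 : RingQuot (TorusRel k m)) ∈ M ⊔ Ideal.span {x} := by
    rw [htop]; trivial
  obtain ⟨y, hy, z, hz, hyz⟩ := Submodule.mem_sup.mp h1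
  obtain ⟨r, hr⟩ := Submodule.mem_span_singleton.mp hz
  have hrx : r • x ∈ Idl k m := by
    rw [smul_eq_mul]
    exact Ideal.mul_mem_left _ _ hx
  have hyeq : y = 1 - r • x := by rw [← hr] at hyz; rw [← hyz]; abel
  have hunit : IsUnit y := by
    rw [hyeq]
    exact IsNilpotent.isUnit_one_sub ⟨2*m+1, Idl_nil hrx⟩
  obtain ⟨u, hu⟩ := hunit
  have hm1 : (↑u⁻¹ : RingQuot (TorusRel k m)) * y ∈ M := Ideal.mul_mem_left _ _ hy
  rw [← hu, Units.inv_mul] at hm1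
  exact hM.2.ne_top (Ideal.eq_top_iff_one M |>.mpr hm1)

lemma jac_eq : (⊥ : Ideal (RingQuot (TorusRel k m))).jacobson = Idl k m :=
  le_antisymm (sInf_le ⟨bot_le, Idl_max⟩) Idl_le_jac

lemma z_mem : ∀ n : ℕ, (tgen k m 0 * tgen k m 1)^n ∈ ((Idl k m).restrictScalars k)^(2*n) := by
  intro n
  induction n with
  | zero =>
    rw [pow_zero, pow_zero]
    exact Submodule.one_le.mp le_rfl
  | succ n ih =>
    have e : 2*(n+1) = 2*n+1+1 := by ring
    have h0 : tgen k m 0 ∈ (Idl k m).restrictScalars k := Ideal.subset_span ⟨0, rfl⟩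
    have h1 : tgen k m 1 ∈ (Idl k m).restrictScalars k := Ideal.subset_span ⟨1, rfl⟩
    rw [e, pow_succ, pow_succ, pow_succ, ← mul_assoc]
    exact Submodule.mul_mem_mul (Submodule.mul_mem_mul ih h0) h1

end Main

/-- The torus-loop algebra `A` has Jacobson radical `J` with `J^(2m+1) = 0` and
`J^(2m) ≠ 0`; moreover `A` is local with residue field `k` (every element is congruent to
a scalar modulo `J`). -/
theorem stmt_8 (k : Type*) [Field k] (m : ℕ) (hm : 1 ≤ m) :
    (Submodule.restrictScalars k
        ((⊥ : Ideal (RingQuot (TorusRel k m))).jacobson)) ^ (2 * m + 1) = ⊥ ∧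
    (Submodule.restrictScalars k
        ((⊥ : Ideal (RingQuot (TorusRel k m))).jacobson)) ^ (2 * m) ≠ ⊥ ∧
    IsLocalRing (RingQuot (TorusRel k m)) ∧
    ∀ x : RingQuot (TorusRel k m), ∃ c : k,
      x - algebraMap k _ c ∈ (⊥ : Ideal (RingQuot (TorusRel k m))).jacobson := by
  have hJ : (⊥ : Ideal (RingQuot (TorusRel k m))).jacobson = Idl k m := jac_eq
  refine ⟨?_, ?_, ?_, ?_⟩
  · rw [hJ]; exact key1
  · rw [hJ]
    intro hbot
    have hz := z_mem (k := k) (m := m) m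
    rw [hbot] at hz
    exact z_ne hm (Submodule.mem_bot k |>.mp hz)
  · haveI hnt : Nontrivial (RingQuot (TorusRel k m)) :=
      ⟨1, 0, fun h => one_ne_zero (α := k) (by rw [← map_one (eps k m), h, map_zero])⟩
    refine ⟨fun {x b} hxb => ?_⟩
    have hone : ∀ y : RingQuot (TorusRel k m), y ∈ Idl k m → IsUnit (1 - y) :=
      fun y hy => IsNilpotent.isUnit_one_sub ⟨2*m+1, Idl_nil hy⟩
    obtain ⟨c, hc⟩ := decomp x
    by_cases hc0 : c = 0
    · right
      subst hc0
      rw [map_zero, sub_zero] at hc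
      have hb : b = 1 - x := by rw [← hxb]; abel
      rw [hb]
      exact hone x hc
    · left
      have h2 : algebraMap k (RingQuot (TorusRel k m)) c * algebraMap k _ c⁻¹ = 1 := by
        rw [← map_mul, mul_inv_cancel₀ hc0, map_one]
      have hform : x = algebraMap k (RingQuot (TorusRel k m)) c *
          (1 - -(algebraMap k _ c⁻¹ * (x - algebraMap k _ c))) := by
        rw [sub_neg_eq_add, mul_add, mul_one, ← mul_assoc, h2, one_mul]
        abel
      rw [hform]
      refine IsUnit.mul (IsUnit.map _ (Ne.isUnit hc0)) ?_
      refine IsNilpotent.isUnit_one_sub ⟨2*m+1, Idl_nil ?_⟩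
      exact neg_mem (Ideal.mul_mem_left _ _ hc)
  · intro x
    obtain ⟨c, hc⟩ := decomp x
    refine ⟨c, ?_⟩
    rw [hJ]
    exact hc
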